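/- The shifted moments property is preserved under equivalence of sequences: if M = (M_p) satisfies sm and L = (L_p) is a sequence of positive reals with L ≈ M (i.e., there exists C > 1 with C^{-p-1} L_p ≤ M_p ≤ C^{p+1} L_p for all p), then L also satisfies sm. -/

import Mathlib

/-- The shifted moments property is preserved under equivalence of sequences. -/
theorem sm_stable_under_equivalence (M L : ℕ → ℝ)
    (hMpos : ∀ p, 0 < M p) (hLpos : ∀ p, 0 < L p)
    (hsmM : ∃ C0 > (0:ℝ), ∃ H > (1:ℝ), ∀ p : ℕ,
      Real.log ((M (p+2) / M (p+1)) / (M (p+1) / M p)) ≤ C0 * H ^ (p+1))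
    (hequiv : ∃ C > (1:ℝ), ∀ p : ℕ,
      (C ^ (p+1))⁻¹ * L p ≤ M p ∧ M p ≤ C ^ (p+1) * L p) :
    ∃ C0 > (0:ℝ), ∃ H > (1:ℝ), ∀ p : ℕ,
      Real.log ((L (p+2) / L (p+1)) / (L (p+1) / L p)) ≤ C0 * H ^ (p+1) := by
  obtain ⟨C0, hC0, H, hH, hM⟩ := hsmM
  obtain ⟨C, hC, hE⟩ := hequiv
  have hCpos : (0:ℝ) < C := lt_trans one_pos hC
  have hlogC : 0 < Real.log C := Real.log_pos hC
  refine ⟨C0 + 4 * Real.log C, by positivity, max H 2, lt_of_lt_of_le hH (le_max_left _ _), ?_⟩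
  intro p
  -- log bounds between L and M
  have key : ∀ k : ℕ, Real.log (L k) ≤ (k+1) * Real.log C + Real.log (M k) ∧
      Real.log (M k) ≤ (k+1) * Real.log C + Real.log (L k) := by
    intro k
    obtain ⟨h1, h2⟩ := hE k
    constructor
    · have hL : L k ≤ C ^ (k+1) * M k := by
        have := h1
        rw [inv_mul_le_iff₀ (by positivity)] at this
        linarith [this]
      calc Real.log (L k) ≤ Real.log (C ^ (k+1) * M k) :=
            Real.log_le_log (hLpos k) hL
        _ = (k+1) * Real.log C + Real.log (M k) := by
            rw [Real.log_mul (by positivity) (ne_of_gt (hMpos k)), Real.log_pow]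
            push_cast; ring
    · calc Real.log (M k) ≤ Real.log (C ^ (k+1) * L k) :=
            Real.log_le_log (hMpos k) h2
        _ = (k+1) * Real.log C + Real.log (L k) := by
            rw [Real.log_mul (by positivity) (ne_of_gt (hLpos k)), Real.log_pow]
            push_cast; ring
  have hML : ∀ k : ℕ, 0 < M k / M (k+1) ∨ True := fun _ => Or.inr trivial
  have eL : Real.log ((L (p+2) / L (p+1)) / (L (p+1) / L p)) =
      Real.log (L (p+2)) + Real.log (L p) - 2 * Real.log (L (p+1)) := by
    rw [Real.log_div (ne_of_gt (div_pos (hLpos _) (hLpos _))) (ne_of_gt (div_pos (hLpos _) (hLpos _))),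
      Real.log_div (ne_of_gt (hLpos _)) (ne_of_gt (hLpos _)),
      Real.log_div (ne_of_gt (hLpos _)) (ne_of_gt (hLpos _))]
    ring
  have eM : Real.log ((M (p+2) / M (p+1)) / (M (p+1) / M p)) =
      Real.log (M (p+2)) + Real.log (M p) - 2 * Real.log (M (p+1)) := by
    rw [Real.log_div (ne_of_gt (div_pos (hMpos _) (hMpos _))) (ne_of_gt (div_pos (hMpos _) (hMpos _))),
      Real.log_div (ne_of_gt (hMpos _)) (ne_of_gt (hMpos _)),
      Real.log_div (ne_of_gt (hMpos _)) (ne_of_gt (hMpos _))]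
    ring
  have h1 := (key (p+2)).1
  have h2 := (key p).1
  have h3 := (key (p+1)).2
  have hstep : Real.log ((L (p+2) / L (p+1)) / (L (p+1) / L p)) ≤
      Real.log ((M (p+2) / M (p+1)) / (M (p+1) / M p)) + (4*p+8) * Real.log C := by
    rw [eL, eM]
    push_cast at h1 h2 h3 ⊢
    nlinarith [hlogC]
  have hpow : (4*(p:ℝ)+8) ≤ 4 * (2:ℝ) ^ (p+1) := by
    have h : p + 2 ≤ 2 ^ (p+1) := Nat.succ_le_of_lt (Nat.lt_two_pow_self (n := p+1))
    have : (p:ℝ) + 2 ≤ 2 ^ (p+1) := by exact_mod_cast h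
    linarith
  have h2le : (2:ℝ) ^ (p+1) ≤ (max H 2) ^ (p+1) :=
    pow_le_pow_left₀ (by norm_num) (le_max_right _ _) _
  have hHle : H ^ (p+1) ≤ (max H 2) ^ (p+1) :=
    pow_le_pow_left₀ (le_of_lt (lt_trans one_pos hH)) (le_max_left _ _) _
  calc Real.log ((L (p+2) / L (p+1)) / (L (p+1) / L p))
      ≤ Real.log ((M (p+2) / M (p+1)) / (M (p+1) / M p)) + (4*p+8) * Real.log C := hstep
    _ ≤ C0 * H ^ (p+1) + 4 * (2:ℝ) ^ (p+1) * Real.log C := by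
        have := hM p
        nlinarith [hlogC, hpow]
    _ ≤ (C0 + 4 * Real.log C) * (max H 2) ^ (p+1) := by
        nlinarith [hlogC, h2le, hHle, hC0]
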